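/- Let (X, 𝒜, μ) be a complete finite measure space with a partial order ≤, and let p denote the metric projection of L²(X, μ, ℝ) onto the closed convex cone L²_≤(X, μ, ℝ). Then p is integral-preserving: ∫_X p(f) dμ = ∫_X f dμ for every f ∈ L²(X, μ, ℝ). -/

import Mathlib

open MeasureTheory
open scoped ENNReal

/-- The closed convex cone of elements of `L²(X, μ, ℝ)` having a representative that is
isotonic off a `μ`-null set. -/
def isoL2 {X : Type*} [MeasurableSpace X] [PartialOrder X]
    (μ : Measure X) : Set (Lp ℝ 2 μ) :=
  {f | ∃ f₀ : X → ℝ, (⇑f) =ᵐ[μ] f₀ ∧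
    ∃ N : Set X, μ N = 0 ∧ ∀ x ∉ N, ∀ y ∉ N, x ≤ y → f₀ x ≤ f₀ y}

/-- On a complete finite measure space with a partial order, the metric projection `p`
onto `L²_≤(X, μ, ℝ)` is integral-preserving: if `fstar` is the metric projection of `f`
(i.e. the nearest point of the cone), then `∫ fstar dμ = ∫ f dμ`. -/
theorem stmt_8 {X : Type*} [MeasurableSpace X] [PartialOrder X]
    (μ : Measure X) [μ.IsComplete] [IsFiniteMeasure μ] (f fstar : Lp ℝ 2 μ)
    (hproj : fstar ∈ isoL2 μ ∧
      ‖f - fstar‖ = ⨅ g : isoL2 μ, ‖f - (g : Lp ℝ 2 μ)‖) :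
    ∫ x, fstar x ∂μ = ∫ x, f x ∂μ := by
  classical
  set one : Lp ℝ 2 μ := (memLp_const (1:ℝ)).toLp _ with hone_def
  have hone_ae : ⇑one =ᵐ[μ] fun _ => (1:ℝ) := MemLp.coeFn_toLp _
  obtain ⟨⟨f₀, hf₀, N, hN, hmono⟩, hmin⟩ := hproj
  have hmem : ∀ t : ℝ, fstar + t • one ∈ isoL2 μ := by
    intro t
    refine ⟨fun x => f₀ x + t, ?_, N, hN, fun x hx y hy hxy =>
      add_le_add_left (hmono x hx y hy hxy) t⟩
    filter_upwards [Lp.coeFn_add fstar (t • one), Lp.coeFn_smul t one, hone_ae, hf₀]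
      with x h1 h2 h3 h4
    simp only [h1, Pi.add_apply, h2, Pi.smul_apply, h3, h4, smul_eq_mul, mul_one]
  set h := f - fstar with hh
  have hle : ∀ t : ℝ, ‖h‖ ≤ ‖h - t • one‖ := by
    intro t
    have h1 : f - (fstar + t • one) = h - t • one := by rw [hh]; abel
    calc ‖h‖ = ⨅ g : isoL2 μ, ‖f - (g : Lp ℝ 2 μ)‖ := hmin
      _ ≤ ‖f - ((⟨fstar + t • one, hmem t⟩ : isoL2 μ) : Lp ℝ 2 μ)‖ :=
          ciInf_le ⟨0, fun x hx => by rcases hx with ⟨g, rfl⟩; positivity⟩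
            (⟨fstar + t • one, hmem t⟩ : isoL2 μ)
      _ = ‖h - t • one‖ := by rw [h1]
  set c : ℝ := inner ℝ h one with hc_def
  set a : ℝ := ‖one‖ ^ 2 with ha_def
  have ha : 0 ≤ a := by positivity
  have key : ∀ t : ℝ, 0 ≤ a * t ^ 2 - 2 * t * c := by
    intro t
    have h1 := hle t
    have h2 : ‖h‖ ^ 2 ≤ ‖h - t • one‖ ^ 2 := by
      have := norm_nonneg h
      nlinarith [norm_nonneg (h - t • one)]
    have h3 : ‖h - t • one‖ ^ 2 = ‖h‖ ^ 2 - 2 * (t * c) + t ^ 2 * a := by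
      rw [ha_def, hc_def]
      rw [norm_sub_sq_real]
      rw [real_inner_smul_right, norm_smul]
      simp [mul_pow, abs_mul_abs_self]
    nlinarith
  have hc : c = 0 := by
    by_contra hc
    have hc2 : 0 < c ^ 2 := by positivity
    have hap : (0:ℝ) < a + 1 := by linarith
    have := key (c / (a + 1))
    have h1 : a * (c / (a + 1)) ^ 2 - 2 * (c / (a + 1)) * c
        = (a * c ^ 2 - 2 * c ^ 2 * (a + 1)) / (a + 1) ^ 2 := by
      field_simp
    rw [h1] at this
    have h2 : 0 ≤ a * c ^ 2 - 2 * c ^ 2 * (a + 1) := by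
      have := (div_nonneg_iff).mp this
      rcases this with ⟨h, _⟩ | ⟨_, h⟩
      · exact h
      · nlinarith
    nlinarith
  -- now translate c = 0 to integrals
  have hint : ∀ g : Lp ℝ 2 μ, Integrable g μ :=
    fun g => (Lp.memLp g).integrable (by norm_num)
  have hc_int : c = ∫ x, h x ∂μ := by
    rw [hc_def, MeasureTheory.L2.inner_def]
    refine integral_congr_ae ?_
    filter_upwards [hone_ae] with x hx
    simp [hx]
  have hsub : ∫ x, h x ∂μ = ∫ x, f x ∂μ - ∫ x, fstar x ∂μ := by
    have hae : ⇑h =ᵐ[μ] fun x => f x - fstar x := Lp.coeFn_sub f fstar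
    rw [integral_congr_ae hae, integral_sub (hint f) (hint fstar)]
  rw [hc_int, hsub] at hc
  linarith
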